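/- Let n ≥ 1 and let M̂ ⊆ S^{n+1} be a weakly convex body in the closed hemisphere ℋ(x₀) for some x₀ ∈ S^{n+1}. Suppose that M̂ satisfies an interior sphere condition with respect to x₀ at every point p ∈ M̂ ∩ 𝒮(x₀). Then M̂ is a convex body in a hemisphere: there exists x ∈ S^{n+1} with M̂ ⊆ ℋ(x) such that for all p, q ∈ M̂, every minimizing geodesic segment from p to q that is contained in ℋ(x) is contained in M̂. -/

import Mathlib

open scoped RealInnerProductSpace

noncomputable section

/-- Euclidean space `ℝ^{n+2}`. -/
abbrev Eucl (n : ℕ) : Type := EuclideanSpace ℝ (Fin (n + 2))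

/-- The unit sphere `S^{n+1} ⊆ ℝ^{n+2}`, as a subtype with the subspace topology. -/
abbrev Sphere (n : ℕ) : Type := Metric.sphere (0 : Eucl n) 1

/-- The closed hemisphere centered at `x`. -/
def hemi {n : ℕ} (x : Sphere n) : Set (Sphere n) :=
  {p : Sphere n | 0 ≤ ⟪(p : Eucl n), (x : Eucl n)⟫}

/-- The open hemisphere centered at `x` (the interior of `hemi x`). -/
def openHemi {n : ℕ} (x : Sphere n) : Set (Sphere n) :=
  {p : Sphere n | 0 < ⟪(p : Eucl n), (x : Eucl n)⟫}

/-- The equator `𝒮(x)`. -/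
def equator {n : ℕ} (x : Sphere n) : Set (Sphere n) :=
  {p : Sphere n | ⟪(p : Eucl n), (x : Eucl n)⟫ = 0}

/-- `Γ` is a minimizing geodesic segment from `p` to `q` in the sphere. -/
def IsMinGeodesicSegment {n : ℕ} (p q : Sphere n) (Γ : Set (Sphere n)) : Prop :=
  ∃ v : Eucl n, ‖v‖ = 1 ∧ ⟪v, (p : Eucl n)⟫ = 0 ∧
    Real.cos (Real.arccos ⟪(p : Eucl n), (q : Eucl n)⟫) • (p : Eucl n) +
      Real.sin (Real.arccos ⟪(p : Eucl n), (q : Eucl n)⟫) • v = (q : Eucl n) ∧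
    Γ = {z : Sphere n | ∃ t ∈ Set.Icc (0 : ℝ) (Real.arccos ⟪(p : Eucl n), (q : Eucl n)⟫),
      (z : Eucl n) = Real.cos t • (p : Eucl n) + Real.sin t • v}

/-- A set is weakly convex if any two of its points are joined by some
minimizing geodesic segment contained in the set. -/
def WeaklyConvexSet {n : ℕ} (M : Set (Sphere n)) : Prop :=
  ∀ p ∈ M, ∀ q ∈ M, ∃ Γ : Set (Sphere n), IsMinGeodesicSegment p q Γ ∧ Γ ⊆ M

/-- A set is convex if every minimizing geodesic segment joining two of its points
is contained in the set. -/
def SphConvexSet {n : ℕ} (M : Set (Sphere n)) : Prop :=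
  ∀ p ∈ M, ∀ q ∈ M, ∀ Γ : Set (Sphere n), IsMinGeodesicSegment p q Γ → Γ ⊆ M

/-- Stereographic projection sending `x₀` to `0 ∈ x₀^⊥`. -/
def stereo {n : ℕ} (x₀ : Sphere n) (p : Sphere n) : Eucl n :=
  (2 / (1 + ⟪(p : Eucl n), (x₀ : Eucl n)⟫)) •
    ((p : Eucl n) - ⟪(p : Eucl n), (x₀ : Eucl n)⟫ • (x₀ : Eucl n))

/-- `A` satisfies an interior sphere condition at `p` with respect to `x₀`:
there is a ball (of the hyperplane `x₀^⊥`) inside `stereo x₀ '' A` touching `stereo x₀ p`. -/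
def IntSphereCond {n : ℕ} (x₀ : Sphere n) (A : Set (Sphere n)) (p : Sphere n) : Prop :=
  ∃ c : Eucl n, ⟪c, (x₀ : Eucl n)⟫ = 0 ∧ ∃ ρ : ℝ, 0 < ρ ∧
    {y : Eucl n | ⟪y, (x₀ : Eucl n)⟫ = 0 ∧ dist y c < ρ} ⊆ stereo x₀ '' A ∧
    ‖stereo x₀ p - c‖ = ρ

namespace SphereAux

open Real

lemma sph_norm {n : ℕ} (p : Sphere n) : ‖(p : Eucl n)‖ = 1 := by
  have := p.2; simpa [mem_sphere_iff_norm] using this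

lemma inner_le_one {n : ℕ} (p q : Sphere n) : ⟪(p : Eucl n), (q : Eucl n)⟫ ≤ 1 := by
  have h := real_inner_le_norm (p : Eucl n) q
  rw [sph_norm, sph_norm] at h; linarith

lemma neg_one_le_inner {n : ℕ} (p q : Sphere n) : -1 ≤ ⟪(p : Eucl n), (q : Eucl n)⟫ := by
  have h := abs_real_inner_le_norm (p : Eucl n) q
  rw [sph_norm, sph_norm] at h
  have := abs_le.1 (by linarith : |⟪(p : Eucl n), (q : Eucl n)⟫| ≤ 1)
  linarith [this.1]

lemma eq_of_inner_eq_one {n : ℕ} (p q : Sphere n) (h : ⟪(p : Eucl n), (q : Eucl n)⟫ = 1) :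
    p = q := by
  have : ‖(p : Eucl n) - (q : Eucl n)‖ ^ 2 = 0 := by
    rw [@norm_sub_sq_real]; rw [sph_norm, sph_norm, h]; ring
  have h2 := pow_eq_zero_iff (n := 2) (by norm_num) |>.1 this
  have h3 := norm_eq_zero.1 h2
  exact Subtype.ext (by rwa [sub_eq_zero] at h3)

lemma neg_of_inner_eq_neg_one {n : ℕ} (p q : Sphere n)
    (h : ⟪(p : Eucl n), (q : Eucl n)⟫ = -1) : (q : Eucl n) = -(p : Eucl n) := by
  have : ‖(p : Eucl n) + (q : Eucl n)‖ ^ 2 = 0 := by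
    rw [@norm_add_sq_real]; rw [sph_norm, sph_norm, h]; ring
  have := pow_eq_zero_iff (n := 2) (by norm_num) |>.1 this
  have := norm_eq_zero.1 this
  linear_combination (norm := module) this

lemma combo_norm' {n : ℕ} {P V : Eucl n} (hP : ‖P‖ = 1) (hV : ‖V‖ = 1)
    (hPV : ⟪V, P⟫ = 0) (a b : ℝ) (hab : a ^ 2 + b ^ 2 = 1) : ‖a • P + b • V‖ = 1 := by
  have h : ‖a • P + b • V‖ ^ 2 = 1 := by
    rw [@norm_add_sq_real]
    rw [inner_smul_left, inner_smul_right]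
    have : ⟪P, V⟫ = 0 := by rw [real_inner_comm]; exact hPV
    rw [this]
    simp only [norm_smul, Real.norm_eq_abs, hP, hV, mul_one, mul_zero]
    nlinarith [sq_abs a, sq_abs b]
  nlinarith [norm_nonneg (a • P + b • V)]

lemma combo_norm {n : ℕ} {P V : Eucl n} (hP : ‖P‖ = 1) (hV : ‖V‖ = 1)
    (hPV : ⟪V, P⟫ = 0) (t : ℝ) : ‖Real.cos t • P + Real.sin t • V‖ = 1 :=
  combo_norm' hP hV hPV _ _ (by rw [add_comm]; exact Real.sin_sq_add_cos_sq t)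

/-- If `-1 < ⟪p,q⟫ < 1` then the direction of a minimizing geodesic segment is
uniquely determined, hence the segment is the canonical one w.r.t. any valid `v`. -/
lemma minGeo_spec {n : ℕ} {p q : Sphere n} {Γ : Set (Sphere n)}
    (h : IsMinGeodesicSegment p q Γ)
    (hgt : -1 < ⟪(p : Eucl n), (q : Eucl n)⟫)
    (v : Eucl n)
    (hend : Real.cos (Real.arccos ⟪(p : Eucl n), (q : Eucl n)⟫) • (p : Eucl n) +
      Real.sin (Real.arccos ⟪(p : Eucl n), (q : Eucl n)⟫) • v = (q : Eucl n))
    (hlt : ⟪(p : Eucl n), (q : Eucl n)⟫ < 1) :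
    Γ = {z : Sphere n | ∃ t ∈ Set.Icc (0 : ℝ) (Real.arccos ⟪(p : Eucl n), (q : Eucl n)⟫),
      (z : Eucl n) = Real.cos t • (p : Eucl n) + Real.sin t • v} := by
  obtain ⟨w, hw1, hw2, hw3, hΓ⟩ := h
  set L := Real.arccos ⟪(p : Eucl n), (q : Eucl n)⟫ with hL
  have hLpos : 0 < L := Real.arccos_pos.2 hlt
  have hLlt : L < π := lt_of_le_of_ne (Real.arccos_le_pi _)
    (fun hc => by have := Real.arccos_eq_pi.1 hc; linarith)
  have hsin : 0 < Real.sin L := Real.sin_pos_of_pos_of_lt_pi hLpos hLlt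
  have hvw : Real.sin L • w = Real.sin L • v := by
    have := hw3.trans hend.symm
    have h2 : Real.sin L • w - Real.sin L • v = 0 := by
      linear_combination (norm := module) this
    linear_combination (norm := module) h2
  have : w = v := smul_right_injective (Eucl n) (ne_of_gt hsin) hvw
  rw [hΓ, this]

/-- Minimizing geodesic segments are unique when the endpoints are not antipodal. -/
lemma minGeo_unique {n : ℕ} {p q : Sphere n} {Γ Γ' : Set (Sphere n)}
    (hgt : -1 < ⟪(p : Eucl n), (q : Eucl n)⟫)
    (h : IsMinGeodesicSegment p q Γ) (h' : IsMinGeodesicSegment p q Γ') : Γ = Γ' := by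
  rcases lt_or_ge ⟪(p : Eucl n), (q : Eucl n)⟫ 1 with hlt | hge
  · obtain ⟨v, _, _, hend, hΓ'⟩ := h'
    rw [minGeo_spec h hgt v hend hlt, hΓ']
  · have hone : ⟪(p : Eucl n), (q : Eucl n)⟫ = 1 := le_antisymm (inner_le_one p q) hge
    obtain ⟨v, _, _, _, hΓ⟩ := h
    obtain ⟨v', _, _, _, hΓ'⟩ := h'
    rw [hΓ, hΓ']
    have hL0 : Real.arccos ⟪(p : Eucl n), (q : Eucl n)⟫ = 0 := by rw [hone, Real.arccos_one]
    rw [hL0]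
    ext z
    simp only [Set.mem_setOf_eq, Set.Icc_self, Set.mem_singleton_iff]
    constructor
    · rintro ⟨t, rfl, hz⟩; exact ⟨0, rfl, by simpa using hz⟩
    · rintro ⟨t, rfl, hz⟩; exact ⟨0, rfl, by simpa using hz⟩

lemma stereo_inner_x0 {n : ℕ} (x₀ p : Sphere n) : ⟪stereo x₀ p, (x₀ : Eucl n)⟫ = 0 := by
  unfold stereo
  rw [inner_smul_left, inner_sub_left, inner_smul_left]
  have : ⟪(x₀ : Eucl n), (x₀ : Eucl n)⟫ = 1 := by
    rw [real_inner_self_eq_norm_sq, sph_norm]; norm_num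
  rw [this]
  simp

lemma stereo_norm_sq {n : ℕ} (x₀ p : Sphere n) :
    ‖stereo x₀ p‖ ^ 2 = 4 * (1 - ⟪(p : Eucl n), (x₀ : Eucl n)⟫ ^ 2) /
      (1 + ⟪(p : Eucl n), (x₀ : Eucl n)⟫) ^ 2 := by
  unfold stereo
  set t := ⟪(p : Eucl n), (x₀ : Eucl n)⟫ with ht
  rw [norm_smul, mul_pow]
  have hsub : ‖(p : Eucl n) - t • (x₀ : Eucl n)‖ ^ 2 = 1 - t ^ 2 := by
    rw [@norm_sub_sq_real, inner_smul_right, sph_norm, norm_smul, Real.norm_eq_abs, sph_norm]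
    rw [← ht]
    nlinarith [sq_abs t]
  rw [hsub, Real.norm_eq_abs, sq_abs, div_pow]
  ring

lemma stereo_inj {n : ℕ} (x₀ : Sphere n) {a b : Sphere n}
    (ha : -1 < ⟪(a : Eucl n), (x₀ : Eucl n)⟫) (hb : -1 < ⟪(b : Eucl n), (x₀ : Eucl n)⟫)
    (h : stereo x₀ a = stereo x₀ b) : a = b := by
  set ta := ⟪(a : Eucl n), (x₀ : Eucl n)⟫ with hta
  set tb := ⟪(b : Eucl n), (x₀ : Eucl n)⟫ with htb
  have hnorm : ‖stereo x₀ a‖ ^ 2 = ‖stereo x₀ b‖ ^ 2 := by rw [h]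
  rw [stereo_norm_sq, stereo_norm_sq] at hnorm
  have h1a : (0:ℝ) < 1 + ta := by linarith
  have h1b : (0:ℝ) < 1 + tb := by linarith
  rw [← hta, ← htb] at hnorm
  have htab : ta = tb := by
    rw [div_eq_div_iff (by positivity) (by positivity)] at hnorm
    nlinarith [mul_pos h1a h1b]
  unfold stereo at h
  rw [← hta, ← htb, ← htab] at h
  have h2 : (2 / (1 + ta)) ≠ 0 := by positivity
  have := smul_right_injective (Eucl n) h2 h
  have : (a : Eucl n) = b := by
    have h3 : (a : Eucl n) - ta • (x₀ : Eucl n) = (b : Eucl n) - ta • (x₀ : Eucl n) := this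
    linear_combination (norm := module) h3
  exact Subtype.ext this

lemma stereo_equator {n : ℕ} (x₀ p : Sphere n) (h : ⟪(p : Eucl n), (x₀ : Eucl n)⟫ = 0) :
    stereo x₀ p = (2:ℝ) • (p : Eucl n) := by
  unfold stereo; rw [h]; simp

/-- If an open ball (in the hyperplane `X^⊥`) is contained in the closed ball of radius 2
and touches `2P` (a norm-2 point of the hyperplane), its center is `(2-ρ)•P`. -/
lemma ball_center {n : ℕ} (P X c : Eucl n) (ρ : ℝ) (hρ : 0 < ρ)
    (hP : ‖P‖ = 1) (hX : ‖X‖ = 1) (hPX : ⟪P, X⟫ = 0) (hcX : ⟪c, X⟫ = 0)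
    (hsub2 : ∀ y : Eucl n, ⟪y, X⟫ = 0 → dist y c < ρ → ‖y‖ ≤ 2)
    (htouch : ‖(2:ℝ) • P - c‖ = ρ) :
    c = (2 - ρ) • P ∧ ρ ≤ 2 := by
  have hcle : ‖c‖ + ρ ≤ 2 := by
    by_contra hcon
    push_neg at hcon
    set ε := min (ρ / 2) ((‖c‖ + ρ - 2) / 2) with hε
    have hε0 : 0 < ε := lt_min (by linarith) (by linarith)
    have hερ : ε < ρ := lt_of_le_of_lt (min_le_left _ _) (by linarith)
    classical
    set u := if hc : c = 0 then P else ‖c‖⁻¹ • c with hu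
    have huX : ⟪u, X⟫ = 0 := by
      rw [hu]; split
      · exact hPX
      · rw [inner_smul_left]; simp [hcX]
    have hun : ‖u‖ = 1 := by
      rw [hu]; split
      · exact hP
      · rename_i hc
        rw [norm_smul]
        field_simp [norm_ne_zero_iff.2 hc]
        rw [one_div, norm_inv, norm_norm, mul_inv_cancel₀ (norm_ne_zero_iff.2 hc)]
    set y := c + (ρ - ε) • u with hy
    have hyX : ⟪y, X⟫ = 0 := by
      rw [hy, inner_add_left, inner_smul_left, hcX, huX]; ring
    have hdisty : dist y c < ρ := by
      rw [hy, dist_eq_norm]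
      simp only [add_sub_cancel_left]
      rw [norm_smul, hun, Real.norm_eq_abs, abs_of_pos (by linarith)]
      linarith
    have hyn : ‖y‖ ≤ 2 := hsub2 y hyX hdisty
    have hyval : ‖y‖ = ‖c‖ + (ρ - ε) := by
      rw [hy, hu]
      split
      · rename_i hc
        rw [hc, zero_add, norm_smul, Real.norm_eq_abs,
          abs_of_pos (by linarith : (0:ℝ) < ρ - ε), hP]
        simp
      · rename_i hc
        have : c + (ρ - ε) • ‖c‖⁻¹ • c = (1 + (ρ - ε) * ‖c‖⁻¹) • c := by module
        rw [this, norm_smul, Real.norm_eq_abs]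
        have h1 : (0:ℝ) < 1 + (ρ - ε) * ‖c‖⁻¹ := by
          have hi : 0 < ‖c‖⁻¹ := inv_pos.2 (norm_pos_iff.2 hc)
          nlinarith
        rw [abs_of_pos h1]
        have hc0 : ‖c‖ ≠ 0 := norm_ne_zero_iff.2 hc
        field_simp
    rw [hyval] at hyn
    have hεle : ε ≤ (‖c‖ + ρ - 2) / 2 := min_le_right _ _
    linarith
  have hρ2 : ρ ≤ 2 := by have := norm_nonneg c; linarith
  set d := (2:ℝ) • P - c with hd
  have hdn : ‖d‖ = ρ := htouch
  have hcn : ‖c‖ ^ 2 ≤ (2 - ρ) ^ 2 := by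
    have h1 : ‖c‖ ≤ 2 - ρ := by linarith
    nlinarith [norm_nonneg c]
  have hcd : c = (2:ℝ) • P - d := by rw [hd]; module
  have hPP : ⟪P, P⟫ = 1 := by rw [real_inner_self_eq_norm_sq, hP]; norm_num
  have hdP : ρ ≤ ⟪d, P⟫ := by
    have hexp : ‖c‖ ^ 2 = 4 - 4 * ⟪d, P⟫ + ρ ^ 2 := by
      rw [hcd, @norm_sub_sq_real, norm_smul, inner_smul_left, hdn, hP]
      rw [real_inner_comm P d]
      simp only [Real.norm_ofNat, starRingEnd_apply, star_trivial]
      ring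
    nlinarith
  have hzero : ‖d - ρ • P‖ ^ 2 = 0 := by
    rw [@norm_sub_sq_real, norm_smul, inner_smul_right, hP, hdn, Real.norm_eq_abs,
      abs_of_pos hρ]
    have hdPle : ⟪d, P⟫ ≤ ρ := by
      calc ⟪d, P⟫ ≤ ‖d‖ * ‖P‖ := real_inner_le_norm d P
      _ = ρ := by rw [hdn, hP]; ring
    have : ⟪d, P⟫ = ρ := le_antisymm hdPle hdP
    rw [this]; ring
  have hdρP : d = ρ • P := by
    have := pow_eq_zero_iff (n := 2) (by norm_num) |>.1 hzero
    have := norm_eq_zero.1 this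
    linear_combination (norm := module) this
  constructor
  · rw [hcd, hdρP]; module
  · exact hρ2

/-- Scalar estimate: for small `t₀`, `(2-ρ)(1-cos t₀) < ρ s sin t₀`. -/
lemma small_t (ρ s : ℝ) (hρ : 0 < ρ) (hρ2 : ρ ≤ 2) (hs : 0 < s) (hs1 : s ≤ 1) :
    ∃ t₀ : ℝ, 0 < t₀ ∧ t₀ ≤ 1/2 ∧ (2 - ρ) * (1 - Real.cos t₀) < ρ * s * Real.sin t₀ := by
  refine ⟨min (1/2) (ρ * s / 4), lt_min (by norm_num) (by positivity), min_le_left _ _, ?_⟩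
  set t₀ := min (1/2) (ρ * s / 4) with ht₀
  have ht0 : 0 < t₀ := lt_min (by norm_num) (by positivity)
  have ht1 : t₀ ≤ 1/2 := min_le_left _ _
  have ht2 : t₀ ≤ ρ * s / 4 := min_le_right _ _
  set h := t₀ / 2 with hh
  have hh0 : 0 < h := by positivity
  have hh1 : h ≤ 1/4 := by rw [hh]; linarith
  have hsinh_pos : 0 < sin h := sin_pos_of_pos_of_lt_pi hh0 (by linarith [pi_gt_three])
  have hsinh_le : sin h ≤ h := sin_le (le_of_lt hh0)
  have hcosh : (1:ℝ)/2 ≤ cos h := by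
    have h1 : sin (h/2) ≤ h/2 := sin_le (by positivity)
    have h2 : sin (h/2) ^ 2 = 1/2 - cos (2 * (h/2)) / 2 := sin_sq_eq_half_sub (h/2)
    have h3 : (2:ℝ) * (h/2) = h := by ring
    rw [h3] at h2
    have h4 : 0 ≤ sin (h/2) := sin_nonneg_of_nonneg_of_le_pi (by positivity)
      (by nlinarith [pi_gt_three])
    nlinarith
  have hcos : 1 - cos t₀ = 2 * sin h ^ 2 := by
    have := sin_sq_eq_half_sub h
    have h3 : (2:ℝ) * h = t₀ := by rw [hh]; ring
    rw [h3] at this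
    linarith
  have hsin : sin t₀ = 2 * sin h * cos h := by
    have := sin_two_mul h
    have h3 : (2:ℝ) * h = t₀ := by rw [hh]; ring
    rw [h3] at this
    linarith
  rw [hcos, hsin]
  have key : (2 - ρ) * sin h < ρ * s * cos h := by
    have l1 : (2 - ρ) * sin h ≤ 2 * h := by nlinarith
    have l2 : 2 * h = t₀ := by rw [hh]; ring
    have l3 : ρ * s / 2 ≤ ρ * s * cos h := by nlinarith
    nlinarith
  nlinarith

/-- The key quantitative step: points slightly inside the cap. -/
lemma stereo_close {n : ℕ} (x₀ p q₀ : Sphere n) (v : Eucl n) (ρ s t₀ : ℝ)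
    (hPX : ⟪(p : Eucl n), (x₀ : Eucl n)⟫ = 0)
    (hvP : ⟪v, (p : Eucl n)⟫ = 0) (hs : ⟪v, (x₀ : Eucl n)⟫ = s)
    (hρ : 0 < ρ) (hρ2 : ρ ≤ 2) (hspos : 0 < s)
    (ht0 : 0 < t₀) (ht1 : t₀ ≤ 1/2)
    (hN : (2 - ρ) * (1 - Real.cos t₀) < ρ * s * Real.sin t₀)
    (hq₀ : (q₀ : Eucl n) = Real.cos t₀ • (p : Eucl n) + Real.sin t₀ • v) :
    dist (stereo x₀ q₀) ((2 - ρ) • (p : Eucl n)) < ρ := by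
  have hPP : ⟪(p : Eucl n), (p : Eucl n)⟫ = 1 := by
    rw [real_inner_self_eq_norm_sq, sph_norm]; norm_num
  have hsint : 0 < Real.sin t₀ :=
    sin_pos_of_pos_of_lt_pi ht0 (by nlinarith [pi_gt_three])
  have hXP : ⟪(x₀ : Eucl n), (p : Eucl n)⟫ = 0 := by rw [real_inner_comm]; exact hPX
  have hg : ⟪(q₀ : Eucl n), (x₀ : Eucl n)⟫ = Real.sin t₀ * s := by
    rw [hq₀, inner_add_left, real_inner_smul_left, real_inner_smul_left, hPX, hs]; ring
  set g := Real.sin t₀ * s with hgdef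
  have hgpos : 0 < g := by positivity
  have h1g : (0:ℝ) < 1 + g := by linarith
  have hq₀P : ⟪(q₀ : Eucl n), (p : Eucl n)⟫ = Real.cos t₀ := by
    rw [hq₀, inner_add_left, real_inner_smul_left, real_inner_smul_left, hPP, hvP]; ring
  have hyP : ⟪stereo x₀ q₀, (p : Eucl n)⟫ = 2 / (1 + g) * Real.cos t₀ := by
    unfold stereo
    rw [hg, real_inner_smul_left, inner_sub_left, real_inner_smul_left, hq₀P, hXP]
    ring
  have hyn : ‖stereo x₀ q₀‖ ^ 2 = 4 * (1 - g ^ 2) / (1 + g) ^ 2 := by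
    rw [stereo_norm_sq, hg]
  have hdist : dist (stereo x₀ q₀) ((2 - ρ) • (p : Eucl n)) ^ 2 =
      4 * (1 - g ^ 2) / (1 + g) ^ 2 - 2 * (2 - ρ) * (2 / (1 + g) * Real.cos t₀)
        + (2 - ρ) ^ 2 := by
    rw [dist_eq_norm, @norm_sub_sq_real, hyn, real_inner_smul_right, hyP, norm_smul,
      Real.norm_eq_abs, sph_norm, abs_of_nonneg (by linarith : (0:ℝ) ≤ 2 - ρ)]
    ring
  have hkey : 4 * (1 - g ^ 2) / (1 + g) ^ 2 - 2 * (2 - ρ) * (2 / (1 + g) * Real.cos t₀)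
      + (2 - ρ) ^ 2 - ρ ^ 2 =
      4 * ((2 - ρ) * (1 - Real.cos t₀) - ρ * g) / (1 + g) := by
    field_simp
    ring
  have hlt : dist (stereo x₀ q₀) ((2 - ρ) • (p : Eucl n)) ^ 2 < ρ ^ 2 := by
    rw [hdist]
    have hnum : 4 * ((2 - ρ) * (1 - Real.cos t₀) - ρ * g) / (1 + g) < 0 := by
      apply div_neg_of_neg_of_pos _ h1g
      rw [hgdef]
      nlinarith
    linarith [hkey]
  have hd0 : (0:ℝ) ≤ dist (stereo x₀ q₀) ((2 - ρ) • (p : Eucl n)) := dist_nonneg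
  nlinarith

end SphereAux

open SphereAux Real

namespace SphereAux

set_option maxHeartbeats 1000000 in
/-- Half circle lemma: if `p, -p ∈ M` and an interior cap at `p` is inside `M`,
then every half great circle from `p` to `-p` leaving in a strictly interior
direction is contained in `M`. -/
lemma half_circle {n : ℕ} (x₀ : Sphere n) (M : Set (Sphere n))
    (hwc : WeaklyConvexSet M) (hsub : M ⊆ hemi x₀)
    (p pneg : Sphere n) (hp : p ∈ M) (hpneg : pneg ∈ M)
    (hpanti : (pneg : Eucl n) = -(p : Eucl n))
    (hpx : ⟪(p : Eucl n), (x₀ : Eucl n)⟫ = 0)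
    (ρ : ℝ) (hρ : 0 < ρ) (hρ2 : ρ ≤ 2)
    (hball : {y : Eucl n | ⟪y, (x₀ : Eucl n)⟫ = 0 ∧ dist y ((2 - ρ) • (p : Eucl n)) < ρ} ⊆
      stereo x₀ '' M) :
    ∀ v : Eucl n, ‖v‖ = 1 → ⟪v, (p : Eucl n)⟫ = 0 →
      0 < ⟪v, (x₀ : Eucl n)⟫ → ∀ t ∈ Set.Icc (0:ℝ) π, ∀ z : Sphere n,
      (z : Eucl n) = Real.cos t • (p : Eucl n) + Real.sin t • v → z ∈ M := by
  have hPP : ⟪(p : Eucl n), (p : Eucl n)⟫ = 1 := by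
    rw [real_inner_self_eq_norm_sq, sph_norm]; norm_num
  intro v hv hvP hvX t ht z hz
  set s := ⟪v, (x₀ : Eucl n)⟫ with hs
  have hs1 : s ≤ 1 := by
    have := real_inner_le_norm v (x₀ : Eucl n)
    rw [hv, sph_norm] at this; linarith
  obtain ⟨t₀, ht₀0, ht₀1, hN⟩ := small_t ρ s hρ hρ2 hvX hs1
  have hq₀n : ‖Real.cos t₀ • (p : Eucl n) + Real.sin t₀ • v‖ = 1 :=
    combo_norm (sph_norm p) hv hvP t₀
  set q₀ : Sphere n := ⟨Real.cos t₀ • (p : Eucl n) + Real.sin t₀ • v, by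
    rw [mem_sphere_zero_iff_norm]; exact hq₀n⟩ with hq₀def
  have hq₀val : (q₀ : Eucl n) = Real.cos t₀ • (p : Eucl n) + Real.sin t₀ • v := rfl
  have hsint₀ : 0 < Real.sin t₀ :=
    sin_pos_of_pos_of_lt_pi ht₀0 (by nlinarith [pi_gt_three])
  have hq₀X : ⟪(q₀ : Eucl n), (x₀ : Eucl n)⟫ = Real.sin t₀ * s := by
    rw [hq₀val, inner_add_left, real_inner_smul_left, real_inner_smul_left, hpx, ← hs]
    ring
  -- q₀ ∈ M via the interior ball
  have hq₀M : q₀ ∈ M := by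
    have hd := stereo_close x₀ p q₀ v ρ s t₀ hpx hvP hs.symm hρ hρ2 hvX ht₀0 ht₀1 hN hq₀val
    obtain ⟨m, hm, hms⟩ := hball ⟨stereo_inner_x0 x₀ q₀, hd⟩
    have hmX : -1 < ⟪(m : Eucl n), (x₀ : Eucl n)⟫ := by
      have := hsub hm; simp only [hemi, Set.mem_setOf_eq] at this; linarith
    have hqX : -1 < ⟪(q₀ : Eucl n), (x₀ : Eucl n)⟫ := by
      rw [hq₀X]; nlinarith
    have := stereo_inj x₀ hmX hqX hms
    rwa [← this]
  -- the two geodesic arcs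
  have hcos1 : Real.cos t₀ < 1 := by
    have := Real.cos_lt_cos_of_nonneg_of_le_pi (le_refl 0) (by nlinarith [pi_gt_three]) ht₀0
    rwa [Real.cos_zero] at this
  have hcos0 : 0 < Real.cos t₀ :=
    cos_pos_of_mem_Ioo ⟨by nlinarith [pi_gt_three], by nlinarith [pi_gt_three]⟩
  have hpv : ⟪(p : Eucl n), v⟫ = 0 := by rw [real_inner_comm]; exact hvP
  have hpq₀ : ⟪(p : Eucl n), (q₀ : Eucl n)⟫ = Real.cos t₀ := by
    rw [hq₀val, inner_add_right, real_inner_smul_right, real_inner_smul_right, hPP, hpv]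
    ring
  have harc : Real.arccos ⟪(p : Eucl n), (q₀ : Eucl n)⟫ = t₀ := by
    rw [hpq₀, Real.arccos_cos (le_of_lt ht₀0) (by nlinarith [pi_gt_three])]
  obtain ⟨Γ₁, hΓ₁, hΓ₁M⟩ := hwc p hp q₀ hq₀M
  have hend1 : Real.cos (Real.arccos ⟪(p : Eucl n), (q₀ : Eucl n)⟫) • (p : Eucl n) +
      Real.sin (Real.arccos ⟪(p : Eucl n), (q₀ : Eucl n)⟫) • v = (q₀ : Eucl n) := by
    rw [harc, hq₀val]
  have hΓ₁eq := minGeo_spec hΓ₁ (by rw [hpq₀]; linarith) v hend1 (by rw [hpq₀]; linarith)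
  -- second arc from q₀ to pneg
  have hq₀pneg : ⟪(q₀ : Eucl n), (pneg : Eucl n)⟫ = -Real.cos t₀ := by
    rw [hpanti, inner_neg_right, real_inner_comm, hpq₀]
  have harc2 : Real.arccos ⟪(q₀ : Eucl n), (pneg : Eucl n)⟫ = π - t₀ := by
    rw [hq₀pneg, Real.arccos_neg,
      Real.arccos_cos (le_of_lt ht₀0) (by nlinarith [pi_gt_three])]
  set v₂ : Eucl n := (-Real.sin t₀) • (p : Eucl n) + Real.cos t₀ • v with hv₂def
  have hend2 : Real.cos (Real.arccos ⟪(q₀ : Eucl n), (pneg : Eucl n)⟫) • (q₀ : Eucl n) +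
      Real.sin (Real.arccos ⟪(q₀ : Eucl n), (pneg : Eucl n)⟫) • v₂ = (pneg : Eucl n) := by
    rw [harc2, Real.cos_pi_sub, Real.sin_pi_sub, hpanti, hq₀val, hv₂def]
    match_scalars
    · linear_combination (-1 : ℝ) * (Real.sin_sq_add_cos_sq t₀)
    · ring
  obtain ⟨Γ₂, hΓ₂, hΓ₂M⟩ := hwc q₀ hq₀M pneg hpneg
  have hΓ₂eq := minGeo_spec hΓ₂ (by rw [hq₀pneg]; linarith) v₂ hend2
    (by rw [hq₀pneg]; linarith)
  rcases le_or_gt t t₀ with hle | hgt2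
  · apply hΓ₁M
    rw [hΓ₁eq]
    exact ⟨t, ⟨ht.1, by rw [harc]; exact hle⟩, hz⟩
  · apply hΓ₂M
    rw [hΓ₂eq]
    refine ⟨t - t₀, ⟨by linarith, by rw [harc2]; linarith [ht.2]⟩, ?_⟩
    rw [hz, hq₀val, hv₂def]
    have e1 : Real.cos t = Real.cos (t - t₀) * Real.cos t₀ -
        Real.sin (t - t₀) * Real.sin t₀ := by
      rw [← Real.cos_add]; ring_nf
    have e2 : Real.sin t = Real.sin (t - t₀) * Real.cos t₀ +
        Real.cos (t - t₀) * Real.sin t₀ := by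
      rw [← Real.sin_add]; ring_nf
    rw [e1, e2]
    match_scalars <;> ring

set_option maxHeartbeats 1000000 in
/-- Extension of the half circle lemma to boundary directions, by a limit argument. -/
lemma half_circle0 {n : ℕ} (x₀ : Sphere n) (M : Set (Sphere n)) (hcl : IsClosed M)
    (p : Sphere n) (hpx : ⟪(p : Eucl n), (x₀ : Eucl n)⟫ = 0)
    (hhalf : ∀ v : Eucl n, ‖v‖ = 1 → ⟪v, (p : Eucl n)⟫ = 0 →
      0 < ⟪v, (x₀ : Eucl n)⟫ → ∀ t ∈ Set.Icc (0:ℝ) π, ∀ z : Sphere n,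
      (z : Eucl n) = Real.cos t • (p : Eucl n) + Real.sin t • v → z ∈ M) :
    ∀ v : Eucl n, ‖v‖ = 1 → ⟪v, (p : Eucl n)⟫ = 0 →
      0 ≤ ⟪v, (x₀ : Eucl n)⟫ → ∀ t ∈ Set.Icc (0:ℝ) π, ∀ z : Sphere n,
      (z : Eucl n) = Real.cos t • (p : Eucl n) + Real.sin t • v → z ∈ M := by
  intro v hv hvP hvX t ht z hz
  rcases hvX.lt_or_eq with hpos | heq0
  · exact hhalf v hv hvP hpos t ht z hz
  have heq : ⟪v, (x₀ : Eucl n)⟫ = 0 := heq0.symm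
  have hXv : ⟪(x₀ : Eucl n), v⟫ = 0 := by rw [real_inner_comm]; exact heq
  have hXp : ⟪(x₀ : Eucl n), (p : Eucl n)⟫ = 0 := by rw [real_inner_comm]; exact hpx
  set ε : ℕ → ℝ := fun k => ((k : ℝ) + 2)⁻¹ with hε
  have hε0 : ∀ k, 0 < ε k := fun k => by positivity
  have hε1 : ∀ k, ε k ≤ 1/2 := fun k => by
    have hk : (0:ℝ) ≤ (k : ℝ) := Nat.cast_nonneg k
    have h2 : ((k : ℝ) + 2)⁻¹ ≤ (2:ℝ)⁻¹ := by
      apply inv_anti₀ (by norm_num)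
      linarith
    rw [hε]
    simpa using h2
  set V : ℕ → Eucl n := fun k => Real.cos (ε k) • v + Real.sin (ε k) • (x₀ : Eucl n)
    with hV
  have hVn : ∀ k, ‖V k‖ = 1 := fun k => combo_norm hv (sph_norm x₀) hXv (ε k)
  have hVp : ∀ k, ⟪V k, (p : Eucl n)⟫ = 0 := fun k => by
    rw [hV]
    simp only
    rw [inner_add_left, real_inner_smul_left, real_inner_smul_left, hvP, hXp]
    ring
  have hVx : ∀ k, 0 < ⟪V k, (x₀ : Eucl n)⟫ := fun k => by
    rw [hV]
    simp only
    rw [inner_add_left, real_inner_smul_left, real_inner_smul_left, heq,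
      real_inner_self_eq_norm_sq, sph_norm]
    have : 0 < Real.sin (ε k) :=
      sin_pos_of_pos_of_lt_pi (hε0 k) (by nlinarith [pi_gt_three, hε1 k, hε0 k])
    nlinarith
  set f : ℕ → Sphere n := fun k =>
    ⟨Real.cos t • (p : Eucl n) + Real.sin t • V k, by
      rw [mem_sphere_zero_iff_norm]
      exact combo_norm (sph_norm p) (hVn k) (hVp k) t⟩ with hf
  have hfM : ∀ k, f k ∈ M := fun k => hhalf (V k) (hVn k) (hVp k) (hVx k) t ht (f k) rfl
  have htend : Filter.Tendsto f Filter.atTop (nhds z) := by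
    rw [tendsto_subtype_rng]
    set F : ℝ → Eucl n := fun e => Real.cos t • (p : Eucl n) + Real.sin t •
      (Real.cos e • v + Real.sin e • (x₀ : Eucl n)) with hF
    have hεtend : Filter.Tendsto ε Filter.atTop (nhds 0) := by
      rw [hε]
      exact (Filter.tendsto_atTop_add_const_right _ 2
        tendsto_natCast_atTop_atTop).inv_tendsto_atTop
    have hcont : Continuous F := by
      rw [hF]; fun_prop
    have h3 := (hcont.tendsto 0).comp hεtend
    have hF0 : F 0 = (z : Eucl n) := by
      rw [hF, hz]; simp
    rw [hF0] at h3
    exact h3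
  exact hcl.mem_of_tendsto htend (Filter.Eventually.of_forall hfM)

end SphereAux

set_option maxHeartbeats 1000000 in
/-- A weakly convex body in a closed hemisphere `ℋ(x₀)` satisfying an
interior sphere condition at all points of `M̂ ∩ 𝒮(x₀)` is a convex body in a
hemisphere: every minimizing geodesic segment between two of its points which is
contained in the hemisphere is contained in the body. -/
theorem weakly_convex_body_is_convex_body (n : ℕ) (hn : 1 ≤ n) (x₀ : Sphere n)
    (M : Set (Sphere n)) (hcpt : IsCompact M) (hint : (interior M).Nonempty)
    (hwc : WeaklyConvexSet M) (hsub : M ⊆ hemi x₀)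
    (hisc : ∀ p ∈ M ∩ equator x₀, IntSphereCond x₀ (closure M) p) :
    ∃ x : Sphere n, M ⊆ hemi x ∧
      ∀ p ∈ M, ∀ q ∈ M, ∀ Γ : Set (Sphere n),
        IsMinGeodesicSegment p q Γ → Γ ⊆ hemi x → Γ ⊆ M := by
  classical
  by_cases hanti : ∃ p ∈ M, ∃ q ∈ M, (q : Eucl n) = -(p : Eucl n)
  swap
  · -- no antipodal pair: minimizing geodesics are unique
    refine ⟨x₀, hsub, ?_⟩
    intro p hp q hq Γ hΓ _
    have hne : ⟪(p : Eucl n), (q : Eucl n)⟫ ≠ -1 := fun h =>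
      hanti ⟨p, hp, q, hq, neg_of_inner_eq_neg_one p q h⟩
    have hgt : -1 < ⟪(p : Eucl n), (q : Eucl n)⟫ :=
      lt_of_le_of_ne (neg_one_le_inner p q) (Ne.symm hne)
    obtain ⟨Γ₀, hΓ₀, hΓ₀M⟩ := hwc p hp q hq
    rw [minGeo_unique hgt hΓ hΓ₀]
    exact hΓ₀M
  · obtain ⟨p, hp, pneg, hpneg, hpanti⟩ := hanti
    suffices hh : hemi x₀ ⊆ M by
      exact ⟨x₀, hsub, fun _ _ _ _ Γ _ hΓh => hΓh.trans hh⟩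
    -- p lies on the equator
    have hpx : ⟪(p : Eucl n), (x₀ : Eucl n)⟫ = 0 := by
      have h1 := hsub hp
      have h2 := hsub hpneg
      simp only [hemi, Set.mem_setOf_eq] at h1 h2
      rw [hpanti, inner_neg_left] at h2
      linarith
    obtain ⟨c, hcX, ρ, hρ, hball, htouch⟩ := hisc p ⟨hp, hpx⟩
    rw [hcpt.isClosed.closure_eq] at hball
    have hstereo_p : stereo x₀ p = (2:ℝ) • (p : Eucl n) := stereo_equator x₀ p hpx
    -- the ball lies in the closed ball of radius 2
    have hsub2 : ∀ y : Eucl n, ⟪y, (x₀ : Eucl n)⟫ = 0 → dist y c < ρ → ‖y‖ ≤ 2 := by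
      intro y h1 h2
      obtain ⟨m, hm, rfl⟩ := hball ⟨h1, h2⟩
      have htm : 0 ≤ ⟪(m : Eucl n), (x₀ : Eucl n)⟫ := hsub hm
      have habs : ⟪(m : Eucl n), (x₀ : Eucl n)⟫ ≤ 1 := inner_le_one m x₀
      have hns := stereo_norm_sq x₀ m
      have h1t : (0:ℝ) < 1 + ⟪(m : Eucl n), (x₀ : Eucl n)⟫ := by linarith
      have hle4 : ‖stereo x₀ m‖ ^ 2 ≤ 4 := by
        rw [hns, div_le_iff₀ (by positivity)]
        nlinarith
      nlinarith [norm_nonneg (stereo x₀ m)]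
    obtain ⟨hc_eq, hρ2⟩ := ball_center (p : Eucl n) (x₀ : Eucl n) c ρ hρ (sph_norm p)
      (sph_norm x₀) hpx hcX hsub2 (by rw [← hstereo_p]; exact htouch)
    rw [hc_eq] at hball
    have hPP : ⟪(p : Eucl n), (p : Eucl n)⟫ = 1 := by
      rw [real_inner_self_eq_norm_sq, sph_norm]; norm_num
    have hhalf := half_circle x₀ M hwc hsub p pneg hp hpneg hpanti hpx ρ hρ hρ2 hball
    have hhalf0 := half_circle0 x₀ M hcpt.isClosed p hpx hhalf
    -- final assembly
    intro w hw
    have hwx : 0 ≤ ⟪(w : Eucl n), (x₀ : Eucl n)⟫ := hw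
    set α := ⟪(p : Eucl n), (w : Eucl n)⟫ with hα
    have hwp : ⟪(w : Eucl n), (p : Eucl n)⟫ = α := by rw [hα, real_inner_comm]
    have hαle : α ≤ 1 := inner_le_one p w
    have hαge : -1 ≤ α := neg_one_le_inner p w
    rcases eq_or_lt_of_le hαle with h1 | h1
    · have : p = w := eq_of_inner_eq_one p w h1
      rwa [← this]
    rcases eq_or_lt_of_le hαge with h2 | h2
    · have hwn : (w : Eucl n) = -(p : Eucl n) := neg_of_inner_eq_neg_one p w h2.symm
      have : w = pneg := Subtype.ext (by rw [hwn, hpanti])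
      rwa [this]
    set t := Real.arccos α with htdef
    have ht0 : 0 < t := Real.arccos_pos.2 h1
    have htπ : t < π := lt_of_le_of_ne (Real.arccos_le_pi _)
      (fun hc => by have := Real.arccos_eq_pi.1 hc; linarith)
    have hsint : 0 < Real.sin t := sin_pos_of_pos_of_lt_pi ht0 htπ
    have hcost : Real.cos t = α := Real.cos_arccos hαge hαle
    set v : Eucl n := (Real.sin t)⁻¹ • ((w : Eucl n) - α • (p : Eucl n)) with hvdef
    have hwsub : ‖(w : Eucl n) - α • (p : Eucl n)‖ ^ 2 = 1 - α ^ 2 := by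
      rw [@norm_sub_sq_real, inner_smul_right, hwp, sph_norm, norm_smul, Real.norm_eq_abs,
        sph_norm]
      nlinarith [sq_abs α]
    have hsin2 : Real.sin t ^ 2 = 1 - α ^ 2 := by
      rw [Real.sin_sq, hcost]
    have hvn : ‖v‖ = 1 := by
      have hv2 : ‖v‖ ^ 2 = 1 := by
        rw [hvdef, norm_smul, Real.norm_eq_abs, abs_of_pos (inv_pos.2 hsint), mul_pow,
          hwsub, ← hsin2]
        field_simp
      nlinarith [norm_nonneg v]
    have hvP : ⟪v, (p : Eucl n)⟫ = 0 := by
      rw [hvdef, real_inner_smul_left, inner_sub_left, real_inner_smul_left, hwp, hPP]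
      ring
    have hvX : 0 ≤ ⟪v, (x₀ : Eucl n)⟫ := by
      rw [hvdef, real_inner_smul_left, inner_sub_left, real_inner_smul_left, hpx]
      have := inv_pos.2 hsint
      nlinarith
    have hwz : (w : Eucl n) = Real.cos t • (p : Eucl n) + Real.sin t • v := by
      rw [hvdef, hcost, smul_smul, mul_inv_cancel₀ (ne_of_gt hsint), one_smul]
      module
    exact hhalf0 v hvn hvP hvX t ⟨le_of_lt ht0, le_of_lt htπ⟩ w hwz
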